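/- Let k be a perfect field of prime characteristic p, let R = k[x₁,…,x_d], and let f ∈ R be a nonzero polynomial such that every monomial in the support of f is squarefree. Then f has level one, i.e., I_1(f^{p−1}) = R. -/

import Mathlib

open MvPolynomial

/-- `J^[q]`: the ideal generated by the `q`-th powers of the elements of `J`. -/
def bracketPow {R : Type*} [CommRing R] (q : ℕ) (J : Ideal R) : Ideal R :=
  Ideal.span ((fun a => a ^ q) '' (J : Set R))

/-- `I_e(g)` (for the prime `p`): the smallest ideal `J` with `g ∈ J^[p^e]`. -/
def rootIdeal {R : Type*} [CommRing R] (p e : ℕ) (g : R) : Ideal R :=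
  sInf {J : Ideal R | g ∈ bracketPow (p ^ e) J}

/-- `f` has level `e`: `e` is the least integer `≥ 1` such that
`f^(p^e - p) ∈ (I_e(f^(p^e - 1)))^[p^e]`. -/
def HasLevel {R : Type*} [CommRing R] (p : ℕ) (f : R) (e : ℕ) : Prop :=
  IsLeast {e' : ℕ | 1 ≤ e' ∧
    f ^ (p ^ e' - p) ∈ bracketPow (p ^ e') (rootIdeal p e' (f ^ (p ^ e' - 1)))} e

section Aux

open scoped Classical

variable {σ k : Type*} (p : ℕ)

/-- componentwise `(m - μ0)/p` -/
noncomputable def qf (μ0 m : σ →₀ ℕ) : σ →₀ ℕ := Finsupp.mapRange (· / p) (Nat.zero_div p) (m - μ0)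

lemma qf_apply (μ0 m : σ →₀ ℕ) (i : σ) : qf p μ0 m i = (m i - μ0 i) / p := by
  simp [qf, Finsupp.mapRange_apply]

variable [Field k] [Fact p.Prime] [CharP k p] [PerfectField k]

noncomputable def proot (μ0 : σ →₀ ℕ) (h : MvPolynomial σ k) : MvPolynomial σ k :=
  ∑ m ∈ h.support,
    if p • qf p μ0 m + μ0 = m then
      monomial (qf p μ0 m) ((frobeniusEquiv k p).symm (h.coeff m)) else 0

lemma proot_eq_sum (μ0 : σ →₀ ℕ) (h : MvPolynomial σ k) (s : Finset (σ →₀ ℕ))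
    (hs : h.support ⊆ s) :
    proot p μ0 h = ∑ m ∈ s,
      (if p • qf p μ0 m + μ0 = m then
        monomial (qf p μ0 m) ((frobeniusEquiv k p).symm (h.coeff m)) else 0) := by
  rw [proot]
  refine Finset.sum_subset hs fun x _ hx => ?_
  rw [notMem_support_iff.mp hx]
  simp

lemma proot_zero (μ0 : σ →₀ ℕ) : proot p μ0 (0 : MvPolynomial σ k) = 0 := by
  simp [proot]

lemma proot_add (μ0 : σ →₀ ℕ) (h1 h2 : MvPolynomial σ k) :
    proot p μ0 (h1 + h2) = proot p μ0 h1 + proot p μ0 h2 := by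
  have hsub : (h1 + h2).support ⊆ h1.support ∪ h2.support := support_add
  rw [proot_eq_sum p μ0 (h1 + h2) _ hsub,
    proot_eq_sum p μ0 h1 (h1.support ∪ h2.support) Finset.subset_union_left,
    proot_eq_sum p μ0 h2 (h1.support ∪ h2.support) Finset.subset_union_right,
    ← Finset.sum_add_distrib]
  refine Finset.sum_congr rfl fun m _ => ?_
  rw [coeff_add]
  split_ifs with h
  · rw [map_add, map_add]
  · simp

lemma proot_monomial (μ0 m : σ →₀ ℕ) (a : k) :
    proot p μ0 (monomial m a) =
      if p • qf p μ0 m + μ0 = m then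
        monomial (qf p μ0 m) ((frobeniusEquiv k p).symm a) else 0 := by
  rcases eq_or_ne a 0 with rfl | ha
  · simp [proot]
  · rw [proot, support_monomial, if_neg ha, Finset.sum_singleton, coeff_monomial, if_pos rfl]

noncomputable def prootHom (μ0 : σ →₀ ℕ) : MvPolynomial σ k →+ MvPolynomial σ k :=
  ⟨⟨proot p μ0, proot_zero p μ0⟩, proot_add p μ0⟩

-- arithmetic helpers
lemma cond_iff_dvd {p u w : ℕ} (hp : 0 < p) (h : u ≤ w) :
    p * ((w - u) / p) + u = w ↔ p ∣ w - u := by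
  constructor
  · intro hc
    exact ⟨(w - u) / p, by omega⟩
  · intro ⟨s, hs⟩
    rw [hs, Nat.mul_div_cancel_left _ hp]
    omega

lemma coord_iff {p a u : ℕ} (hp : 0 < p) (hu : u < p) (t : ℕ) :
    p * ((a + p * t - u) / p) + u = a + p * t ↔ p * ((a - u) / p) + u = a := by
  rcases le_or_gt u a with h | h
  · rw [cond_iff_dvd hp (by omega), cond_iff_dvd hp h,
      show a + p * t - u = (a - u) + p * t from by omega]
    rw [add_comm]
    exact Nat.dvd_add_right ⟨t, rfl⟩
  · have hR : ¬ (p * ((a - u) / p) + u = a) := by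
      have : a - u = 0 := by omega
      rw [this]; omega
    rw [iff_false_intro hR, iff_false]
    rcases Nat.eq_zero_or_pos t with rfl | ht
    · have : a + p * 0 - u = 0 := by omega
      rw [this]; omega
    · have huw : u ≤ a + p * t := by nlinarith
      rw [cond_iff_dvd hp huw]
      rintro ⟨s, hs⟩
      have h1 : a + p * t = p * s + u := by omega
      have h2 : p * s < p * t := by
        have : u ≤ p * t := by nlinarith
        omega
      have h3 : s < t := lt_of_mul_lt_mul_left h2 (Nat.zero_le p)
      have h4 : p * s + p ≤ p * t := by nlinarith
      omega

lemma coord_shift {p a u : ℕ} (hp : 0 < p) (h : u ≤ a) (t : ℕ) :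
    (a + p * t - u) / p = (a - u) / p + t := by
  rw [show a + p * t - u = (a - u) + p * t from by omega, Nat.add_mul_div_left _ _ hp]

lemma cond_shift_iff {p : ℕ} (hp : 0 < p) {μ0 : σ →₀ ℕ} (hμ : ∀ i, μ0 i < p) (m τ : σ →₀ ℕ) :
    (p • qf p μ0 (m + p • τ) + μ0 = m + p • τ) ↔ (p • qf p μ0 m + μ0 = m) := by
  rw [Finsupp.ext_iff, Finsupp.ext_iff]
  refine forall_congr' fun i => ?_
  simp only [Finsupp.add_apply, Finsupp.smul_apply, qf_apply, smul_eq_mul]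
  exact coord_iff hp (hμ i) (τ i)

lemma cond_le {p : ℕ} {μ0 m : σ →₀ ℕ} (h : p • qf p μ0 m + μ0 = m) (i : σ) : μ0 i ≤ m i := by
  have := Finsupp.ext_iff.mp h i
  simp only [Finsupp.add_apply, Finsupp.smul_apply, qf_apply, smul_eq_mul] at this
  omega

lemma qf_shift {p : ℕ} (hp : 0 < p) {μ0 m : σ →₀ ℕ} (h : p • qf p μ0 m + μ0 = m) (τ : σ →₀ ℕ) :
    qf p μ0 (m + p • τ) = qf p μ0 m + τ := by
  ext i
  simp only [Finsupp.add_apply, Finsupp.smul_apply, qf_apply, smul_eq_mul]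
  exact coord_shift hp (cond_le h i) (τ i)

lemma proot_mul_pow {μ0 : σ →₀ ℕ} (hμ : ∀ i, μ0 i < p) (r g : MvPolynomial σ k) :
    proot p μ0 (r * g ^ p) = proot p μ0 r * g := by
  have hp : 0 < p := (Fact.out : p.Prime).pos
  induction g using MvPolynomial.induction_on' with
  | add g1 g2 ih1 ih2 =>
    rw [add_pow_char, mul_add, proot_add, ih1, ih2, mul_add]
  | monomial τ b =>
    induction r using MvPolynomial.induction_on' with
    | add r1 r2 ih1 ih2 =>
      rw [add_mul, proot_add, ih1, ih2, proot_add, add_mul]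
    | monomial m a =>
      rw [monomial_pow, monomial_mul, proot_monomial, proot_monomial]
      by_cases h : p • qf p μ0 m + μ0 = m
      · rw [if_pos h, if_pos ((cond_shift_iff hp hμ m τ).mpr h), qf_shift hp h, monomial_mul]
        congr 1
        rw [map_mul]
        congr 1
        rw [← frobenius_def]
        exact (frobeniusEquiv k p).symm_apply_apply b
      · rw [if_neg h, if_neg (fun hc => h ((cond_shift_iff hp hμ m τ).mp hc)), zero_mul]

lemma proot_mem {μ0 : σ →₀ ℕ} (hμ : ∀ i, μ0 i < p) {J : Ideal (MvPolynomial σ k)}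
    {h : MvPolynomial σ k} (hh : h ∈ bracketPow p J) : proot p μ0 h ∈ J := by
  obtain ⟨c, hc, rfl⟩ := Submodule.mem_span_set.mp hh
  rw [Finsupp.sum]
  rw [show proot p μ0 (∑ x ∈ c.support, c x • x) = ∑ x ∈ c.support, proot p μ0 (c x • x) from
    map_sum (prootHom p μ0) _ _]
  refine Ideal.sum_mem J fun x hx => ?_
  obtain ⟨g, hgJ, rfl⟩ := hc hx
  rw [smul_eq_mul, proot_mul_pow p hμ]
  exact Ideal.mul_mem_left J _ hgJ

lemma proot_of_small {μ0 : σ →₀ ℕ} {h : MvPolynomial σ k}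
    (hsm : ∀ m ∈ h.support, ∀ i, m i < p) (hmem : μ0 ∈ h.support) :
    proot p μ0 h = C ((frobeniusEquiv k p).symm (h.coeff μ0)) := by
  rw [proot]
  rw [Finset.sum_eq_single_of_mem μ0 hmem ?_]
  · have hq : qf p μ0 μ0 = 0 := by
      ext i; simp [qf_apply, Nat.sub_self]
    rw [hq, if_pos (by simp), C_apply]
  · intro m hm hne
    rw [if_neg]
    intro hc
    apply hne
    ext i
    have := Finsupp.ext_iff.mp hc i
    simp only [Finsupp.add_apply, Finsupp.smul_apply, qf_apply, smul_eq_mul] at this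
    have hlt : m i - μ0 i < p := by have := hsm m hm i; omega
    rw [Nat.div_eq_of_lt hlt] at this
    omega

end Aux

lemma supp_pow {σ R : Type*} [CommSemiring R] [DecidableEq σ] (f : MvPolynomial σ R)
    (hf : ∀ m ∈ f.support, ∀ i, m i ≤ 1) :
    ∀ n, ∀ m ∈ (f ^ n).support, ∀ i, m i ≤ n := by
  intro n
  induction n with
  | zero =>
    intro m hm i
    rw [pow_zero, mem_support_iff, coeff_one] at hm
    split_ifs at hm with h
    · rw [← h]
      simp
    · exact absurd rfl hm
  | succ n ih =>
    intro m hm i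
    rw [pow_succ] at hm
    have := support_mul _ _ hm
    rw [Finset.mem_add] at this
    obtain ⟨y, hy, z, hz, rfl⟩ := this
    have h1 := ih y hy i
    have h2 := hf z hz i
    simp only [Finsupp.add_apply]
    omega

/-- If every monomial in the support of a nonzero `f ∈ k[x₁,…,x_d]` is squarefree, then `f`
has level one, i.e. `I_1(f^(p-1)) = R`. -/
theorem stmt_13 (p : ℕ) [Fact p.Prime] (k : Type*) [Field k] [CharP k p] [PerfectField k]
    (d : ℕ) (f : MvPolynomial (Fin d) k) (hf : f ≠ 0)
    (hsf : ∀ m ∈ f.support, ∀ i, m i ≤ 1) :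
    rootIdeal p 1 (f ^ (p - 1)) = ⊤ := by
  have hp : 0 < p := (Fact.out : p.Prime).pos
  rw [rootIdeal, sInf_eq_top]
  intro J hJ
  rw [Set.mem_setOf_eq, pow_one] at hJ
  have hfp : f ^ (p - 1) ≠ 0 := pow_ne_zero _ hf
  have hsupp : ∀ m ∈ (f ^ (p - 1)).support, ∀ i, m i ≤ p - 1 := supp_pow f hsf (p - 1)
  have hne : (f ^ (p - 1)).support.Nonempty := by
    rwa [Finset.nonempty_iff_ne_empty, Ne, support_eq_empty]
  obtain ⟨μ0, hμ0⟩ := hne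
  have hμ : ∀ i, μ0 i < p := fun i => lt_of_le_of_lt (hsupp μ0 hμ0 i) (by omega)
  have hsm : ∀ m ∈ (f ^ (p - 1)).support, ∀ i, m i < p :=
    fun m hm i => lt_of_le_of_lt (hsupp m hm i) (by omega)
  have hmem := proot_mem p hμ hJ
  rw [proot_of_small p hsm hμ0] at hmem
  have hc : (f ^ (p - 1)).coeff μ0 ≠ 0 := mem_support_iff.mp hμ0
  have hcne : (frobeniusEquiv k p).symm ((f ^ (p - 1)).coeff μ0) ≠ 0 :=
    (map_ne_zero_iff _ (frobeniusEquiv k p).symm.injective).mpr hc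
  exact Ideal.eq_top_of_isUnit_mem J hmem ((isUnit_iff_ne_zero.mpr hcne).map C)
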